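/- arXiv:1903.10701 — 3 statements merged into one kernel-verified Lean document; each statement's English description precedes it below -/
import Mathlib

section
/- For every integer n ≥ 5 and every non-hub seed ψ, the parent-sequence from ψ to anchor(ψ) has exactly level(ψ) − 1 steps; that is, if ψ_0 = ψ, ψ_{i+1} = parent(ψ_i) and ψ_r = anchor(ψ), then r = level(ψ) − 1. -/
/-- `σ`: cyclic left shift by one position. -/
def sig (l : List ℕ) : List ℕ := l.rotate 1

/-- `τ`: transposition of the first two entries. -/
def tau : List ℕ → List ℕ
  | a :: b :: rest => b :: a :: rest
  | l => l

/-- Apply a word over the alphabet {σ,τ} (encoded: `false` = σ, `true` = τ)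
letter by letter, from left to right. -/
def applyWord (w : List Bool) (l : List ℕ) : List ℕ :=
  w.foldl (fun p c => if c then tau p else sig p) l

/-- `l` is an n-permutation: a sequence containing each of 1,…,n exactly once. -/
def IsPerm (n : ℕ) (l : List ℕ) : Prop := l.Perm (List.range' 1 n)

/-- The permutation (n, n−1, …, 1). -/
def descList (n : ℕ) : List ℕ := (List.range n).reverse.map (· + 1)

/-- Cyclic successor ⊕1 on {1,…,n−1}. -/
def osucc (n a : ℕ) : ℕ := if a = n - 1 then 1 else a + 1

/-- Cyclic predecessor ⊖1 on {1,…,n−1}. -/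
def opred (n a : ℕ) : ℕ := if a = 1 then n - 1 else a - 1

/-- From a seed (a₁, a₂, …, a_{n−1}) form (a₁, a₂⊕1, a₂, …, a_{n−1}). -/
def seedToPerm (n : ℕ) : List ℕ → List ℕ
  | a1 :: a2 :: rest => a1 :: osucc n a2 :: a2 :: rest
  | l => l

/-- ψ is a seed: an (n−1)-tuple of distinct elements of {1,…,n} with first entry n
such that (a₁, a₂⊕1, a₂, …, a_{n−1}) is an n-permutation. -/
def IsSeed (n : ℕ) (ψ : List ℕ) : Prop :=
  ψ.length = n - 1 ∧ ψ.head? = some n ∧ IsPerm n (seedToPerm n ψ)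

/-- The missing element mis(ψ) = a₂⊕1. -/
def mis (n : ℕ) (ψ : List ℕ) : ℕ := osucc n (ψ.getD 1 0)

/-- The package perms(ψ): all permutations obtained by inserting mis(ψ)
at any position of ψ and then taking any cyclic shift. -/
def perms (n : ℕ) (ψ : List ℕ) : Set (List ℕ) :=
  { π | ∃ i j, i ≤ ψ.length ∧ π = (ψ.insertIdx i (mis n ψ)).rotate j }

/-- cycle(π): the set of cyclic shifts of π. -/
def cycle (π : List ℕ) : Set (List ℕ) := { ρ | ∃ j, ρ = π.rotate j }

/-- ψ̃ = (a₁, mis(ψ), a₂, …, a_{n−1}). -/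
def tildeSeed (n : ℕ) (ψ : List ℕ) : List ℕ :=
  match ψ with
  | a1 :: rest => a1 :: mis n ψ :: rest
  | [] => []

/-- ψ^(i) (for 1 ≤ i ≤ n−1): the right cyclic shift of ψ by i−1 positions
with mis(ψ) prepended; for i = n−1 this is (x, a₂, …, a_{n−1}, a₁). -/
def seedShift (n : ℕ) (ψ : List ℕ) (i : ℕ) : List ℕ := mis n ψ :: ψ.rotate (n - i)

/-- Length of the maximal initial run a = b⊕1 in a list. -/
def decRun (n : ℕ) : List ℕ → ℕ
  | a :: b :: rest => if a = osucc n b then decRun n (b :: rest) + 1 else 1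
  | [_] => 1
  | [] => 0

/-- height(ψ): the largest k with aᵢ = a_{i+1}⊕1 for all 2 ≤ i ≤ k. -/
def height (n : ℕ) (ψ : List ℕ) : ℕ := decRun n ψ.tail

/-- The hub seed (n, b, b⊖1, …, b⊖(n−3)). -/
def hubSeed (n b : ℕ) : List ℕ := n :: (List.range (n - 2)).map (fun j => (opred n)^[j] b)

/-- Hubₙ: the set of hub seeds. -/
def Hub (n : ℕ) : Set (List ℕ) := { ψ | ∃ b, 1 ≤ b ∧ b ≤ n - 1 ∧ ψ = hubSeed n b }

/-- `IsParent n ψ β` means ψ = parent(β): ψ, β are neighboring distinct seeds,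
height(ψ) > 1 and mis(ψ) = mis(β)⊕1. -/
def IsParent (n : ℕ) (par child : List ℕ) : Prop :=
  IsSeed n par ∧ IsSeed n child ∧ par ≠ child ∧
  (perms n par ∩ perms n child).Nonempty ∧
  1 < height n par ∧ mis n par = osucc n (mis n child)

/-- `IsSon n β ψ i` means β = son(ψ, i), i.e. β is a seed with σ^i(ψ^(i)) = β̃. -/
def IsSon (n : ℕ) (child par : List ℕ) (i : ℕ) : Prop :=
  IsSeed n child ∧ sig^[i] (seedShift n par i) = tildeSeed n child

/-- γ_k = σ^k τ. -/
def gam (k : ℕ) : List Bool := List.replicate k false ++ [true]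

/-- W_0 = σ and W_k = τ · ∏_{i=1}^{n−2} σ^i W_{Δ(k,i)} γ_{n−2−i},
where Δ(k,i) = min(k−1, n−2−i). -/
def W (n : ℕ) : ℕ → List Bool
  | 0 => [false]
  | k + 1 => true :: ((List.range (n - 2)).map (fun j =>
      List.replicate (j + 1) false ++ W n (min k (n - 2 - (j + 1))) ++
        gam (n - 2 - (j + 1)))).flatten
  termination_by k => k
  decreasing_by omega

/-- V_n = γ_{n−3} · ∏_{i=2}^{n−3} σ^i W_{Δ(n−3,i)} γ_{n−2−i} · σ^{n−1}. -/
def V (n : ℕ) : List Bool :=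
  gam (n - 3) ++
  ((List.range (n - 4)).map (fun j =>
    List.replicate (j + 2) false ++ W n (min (n - 4) (n - 2 - (j + 2))) ++
      gam (n - 2 - (j + 2)))).flatten ++
  List.replicate (n - 1) false

/-- SEQ_n = γ₁^{n−2} σ² (V_n τ)^{n−2} V_n. -/
def SEQ (n : ℕ) : List Bool :=
  (List.replicate (n - 2) (gam 1)).flatten ++ List.replicate 2 false ++
  (List.replicate (n - 2) (V n ++ [true])).flatten ++ V n

/-- r: the first element after the value n in the left-to-right cyclic reading
of π with the entry p₂ skipped. -/
def rVal (n : ℕ) (π : List ℕ) : ℕ :=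
  match π with
  | p1 :: _ :: rest =>
      let l := p1 :: rest
      l.getD ((l.idxOf n + 1) % l.length) 0
  | _ => 0

/-- The Sawada–Williams successor function `next`. -/
def swNext (n : ℕ) (π : List ℕ) : List ℕ :=
  if π = descList n then sig π
  else if π.getD 1 0 ≠ n ∧ π.getD 1 0 = osucc n (rVal n π) then tau π else sig π

/-- GEN(π, α): all permutations visited (including π) when α is applied to π. -/
def GEN (α : List Bool) (π : List ℕ) : Set (List ℕ) :=
  { ρ | ∃ t, t ≤ α.length ∧ ρ = applyWord (α.take t) π }

/-- Tree(ψ): ψ together with all seeds from which ψ is reachable by parent links. -/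
def SeedTree (n : ℕ) (ψ : List ℕ) : Set (List ℕ) :=
  { β | Relation.ReflTransGen (fun x y => IsParent n y x) β ψ }

/-- bunch(ψ) = (⋃_{β ∈ Tree(ψ)} perms(β) ∖ cycle(ψ̃)) ∪ {ψ̃, ψ^(n−1)}. -/
def bunch (n : ℕ) (ψ : List ℕ) : Set (List ℕ) :=
  ((⋃ β ∈ SeedTree n ψ, perms n β) \ cycle (tildeSeed n ψ)) ∪
    {tildeSeed n ψ, seedShift n ψ (n - 1)}

/-- rank(π): the number of initial letters of SEQ_n needed to reach π from
π₀ = τ((n, n−1, …, 1)). -/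
noncomputable def rank (n : ℕ) (π : List ℕ) : ℕ :=
  sInf { t | applyWord ((SEQ n).take t) (tau (descList n)) = π }

/-- SUM(k,j) = |τ · ∏_{i=1}^{j−1} σ^i W_{Δ(k,i)} γ_{n−2−i}| + j. -/
def SUMw (n k j : ℕ) : ℕ :=
  (true :: ((List.range (j - 1)).map (fun m =>
    List.replicate (m + 1) false ++ W n (min (k - 1) (n - 2 - (m + 1))) ++
      gam (n - 2 - (m + 1)))).flatten).length + j

/-- ord(ψ): the position of the entry mis(ψ)⊕1 in ψ, counted from the right end. -/
def ord (n : ℕ) (ψ : List ℕ) : ℕ := ψ.length - ψ.idxOf (osucc n (mis n ψ))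

/-- Length of the continuation of the maximal decreasing subsequence starting
with current value `cur`. -/
def chainLen (n : ℕ) : List ℕ → ℕ → ℕ
  | [], _ => 0
  | b :: rest, cur => if cur = osucc n b then chainLen n rest b + 1 else chainLen n rest cur

/-- level(ψ) = n − m − 3, where m+1 is the length of dec_seq(ψ). -/
def level (n : ℕ) (ψ : List ℕ) : ℕ := n - chainLen n (ψ.drop 2) (ψ.getD 1 0) - 3


set_option linter.unusedVariables false

section Arith
variable {n : ℕ}

lemma osucc_range (hn : 5 ≤ n) {a : ℕ} (h1 : 1 ≤ a) (h2 : a ≤ n-1) :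
    1 ≤ osucc n a ∧ osucc n a ≤ n - 1 := by unfold osucc; split <;> omega

lemma opred_range (hn : 5 ≤ n) {a : ℕ} (h1 : 1 ≤ a) (h2 : a ≤ n-1) :
    1 ≤ opred n a ∧ opred n a ≤ n - 1 := by unfold opred; split <;> omega

lemma opred_osucc (hn : 5 ≤ n) {a : ℕ} (h1 : 1 ≤ a) (h2 : a ≤ n-1) :
    opred n (osucc n a) = a := by unfold osucc opred; split <;> split <;> omega

lemma osucc_opred (hn : 5 ≤ n) {a : ℕ} (h1 : 1 ≤ a) (h2 : a ≤ n-1) :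
    osucc n (opred n a) = a := by unfold osucc opred; split <;> split <;> omega

lemma osucc_inj (hn : 5 ≤ n) {a b : ℕ} (ha1 : 1 ≤ a) (ha2 : a ≤ n-1) (hb1 : 1 ≤ b)
    (hb2 : b ≤ n-1) (h : osucc n a = osucc n b) : a = b := by
  have := congrArg (opred n) h
  rwa [opred_osucc hn ha1 ha2, opred_osucc hn hb1 hb2] at this

lemma osucc_ne_self (hn : 5 ≤ n) {a : ℕ} (h1 : 1 ≤ a) (h2 : a ≤ n-1) : osucc n a ≠ a := by
  unfold osucc; split <;> omega

lemma opred_ne_self (hn : 5 ≤ n) {a : ℕ} (h1 : 1 ≤ a) (h2 : a ≤ n-1) : opred n a ≠ a := by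
  unfold opred; split <;> omega

lemma osucc_ne_opred (hn : 5 ≤ n) {a : ℕ} (h1 : 1 ≤ a) (h2 : a ≤ n-1) :
    osucc n a ≠ opred n a := by unfold osucc opred; split <;> split <;> omega

lemma osucc_mod (hn : 5 ≤ n) {a : ℕ} (h1 : 1 ≤ a) (h2 : a ≤ n-1) :
    osucc n a = (a - 1 + 1) % (n - 1) + 1 := by
  have h3 : a - 1 + 1 = a := by omega
  rw [h3]; unfold osucc; split
  · rename_i h; rw [h, Nat.mod_self]
  · rw [Nat.mod_eq_of_lt (by omega)]

lemma opred_mod_step (hn : 5 ≤ n) (x : ℕ) :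
    opred n (x % (n - 1) + 1) = (x + (n - 2)) % (n - 1) + 1 := by
  have hm : 0 < n - 1 := by omega
  have hx : x % (n-1) < n-1 := Nat.mod_lt _ hm
  have hr : (x + (n - 2)) % (n - 1) = (x % (n-1) + (n-2)) % (n-1) := by
    conv_lhs => rw [Nat.add_mod, Nat.mod_eq_of_lt (show n - 2 < n - 1 by omega)]
  rw [hr]
  unfold opred; split
  · rename_i h
    have hx0 : x % (n-1) = 0 := by omega
    rw [hx0]; rw [Nat.zero_add, Nat.mod_eq_of_lt (show n - 2 < n - 1 by omega)]
    omega
  · rename_i h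
    have hx1 : 1 ≤ x % (n-1) := by omega
    have he : x % (n-1) + (n-2) = (x % (n-1) - 1) + (n-1) := by omega
    have hlt : (x % (n-1) - 1) % (n-1) = x % (n-1) - 1 := Nat.mod_eq_of_lt (by omega)
    rw [he, Nat.add_mod_right, hlt]
    omega

lemma opred_iter (hn : 5 ≤ n) {a : ℕ} (h1 : 1 ≤ a) (h2 : a ≤ n-1) :
    ∀ j, j ≤ n - 2 → (opred n)^[j] a = (a - 1 + (n - 1 - j)) % (n - 1) + 1 := by
  intro j
  induction j with
  | zero =>
    intro _
    rw [Function.iterate_zero_apply, Nat.sub_zero, Nat.add_mod_right,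
      Nat.mod_eq_of_lt (by omega)]
    omega
  | succ j ih =>
    intro hj
    rw [Function.iterate_succ_apply', ih (by omega), opred_mod_step hn,
      show a - 1 + (n-1-j) + (n-2) = (a - 1 + (n - 1 - (j+1))) + (n-1) from by omega,
      Nat.add_mod_right]

lemma osucc_osucc (hn : 5 ≤ n) {a : ℕ} (h1 : 1 ≤ a) (h2 : a ≤ n-1) :
    osucc n (osucc n a) = (a - 1 + 2) % (n - 1) + 1 := by
  obtain ⟨k1, k2⟩ := osucc_range hn h1 h2
  rw [osucc_mod hn k1 k2, osucc_mod hn h1 h2]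
  have h3 : (a-1+1) % (n-1) + 1 - 1 + 1 = (a-1+1) % (n-1) + 1 := by omega
  rw [h3, Nat.mod_add_mod, show a - 1 + 1 + 1 = a - 1 + 2 from by omega]

lemma osucc3 (hn : 5 ≤ n) {a : ℕ} (h1 : 1 ≤ a) (h2 : a ≤ n-1) :
    osucc n (osucc n (osucc n a)) = (a - 1 + 3) % (n - 1) + 1 := by
  obtain ⟨k1, k2⟩ := osucc_range hn h1 h2
  obtain ⟨m1, m2⟩ := osucc_range hn k1 k2
  rw [osucc_mod hn m1 m2, osucc_osucc hn h1 h2]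
  have h3 : (a-1+2) % (n-1) + 1 - 1 + 1 = (a-1+2) % (n-1) + 1 := by omega
  rw [h3, Nat.mod_add_mod, show a - 1 + 2 + 1 = a - 1 + 3 from by omega]

lemma osucc2_eq_iter (hn : 5 ≤ n) {a : ℕ} (h1 : 1 ≤ a) (h2 : a ≤ n-1) :
    osucc n (osucc n a) = (opred n)^[n-3] a := by
  rw [osucc_osucc hn h1 h2, opred_iter hn h1 h2 (n-3) (by omega),
    show n - 1 - (n-3) = 2 from by omega]

lemma iter_ne_osucc2 (hn : 5 ≤ n) {a j : ℕ} (h1 : 1 ≤ a) (h2 : a ≤ n-1)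
    (hj1 : 1 ≤ j) (hj2 : j ≤ n - 4) :
    (opred n)^[j] a ≠ osucc n (osucc n a) := by
  rw [opred_iter hn h1 h2 j (by omega), osucc_osucc hn h1 h2]
  intro h
  have h' : (a - 1 + (n-1-j)) % (n-1) = (a-1+2) % (n-1) := by omega
  have hmod : (n-1-j) % (n-1) = 2 % (n-1) := Nat.ModEq.add_left_cancel' (a-1) h'
  rw [Nat.mod_eq_of_lt (by omega), Nat.mod_eq_of_lt (by omega)] at hmod
  omega

lemma iter_eq_osucc3 (hn : 5 ≤ n) {a k : ℕ} (h1 : 1 ≤ a) (h2 : a ≤ n-1)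
    (hk : k ≤ n - 4) (h : (opred n)^[k] a = osucc n (osucc n (osucc n a))) :
    k = n - 4 := by
  rw [opred_iter hn h1 h2 k (by omega), osucc3 hn h1 h2] at h
  have h' : (a - 1 + (n-1-k)) % (n-1) = (a-1+3) % (n-1) := by omega
  have hmod : (n-1-k) % (n-1) = 3 % (n-1) := Nat.ModEq.add_left_cancel' (a-1) h'
  rw [Nat.mod_eq_of_lt (show (3:ℕ) < n - 1 by omega)] at hmod
  by_cases hk0 : k = 0
  · rw [hk0, Nat.sub_zero, Nat.mod_self] at hmod; omega
  · rw [Nat.mod_eq_of_lt (by omega)] at hmod; omega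

lemma opred_iter_range (hn : 5 ≤ n) {a : ℕ} (h1 : 1 ≤ a) (h2 : a ≤ n-1) (j : ℕ) :
    1 ≤ (opred n)^[j] a ∧ (opred n)^[j] a ≤ n - 1 := by
  induction j with
  | zero => simpa using ⟨h1, h2⟩
  | succ j ih => rw [Function.iterate_succ_apply']; exact opred_range hn ih.1 ih.2

end Arith

section Chain
variable {n : ℕ}

lemma chainLen_le (n : ℕ) (l : List ℕ) : ∀ cur, chainLen n l cur ≤ l.length := by
  induction l with
  | nil => intro cur; simp [chainLen]
  | cons b rest ih =>
    intro cur
    simp only [chainLen, List.length_cons]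
    split
    · exact Nat.succ_le_succ (ih b)
    · exact le_trans (ih cur) (Nat.le_succ _)

lemma chainLen_insertIdx (hn : 5 ≤ n) {mp : ℕ} (hmp1 : 1 ≤ mp) (hmp2 : mp ≤ n-1) :
    ∀ (l : List ℕ) (t : ℕ) (cur : ℕ), t ≤ l.length →
      1 ≤ cur → cur ≤ n - 1 → (∀ x ∈ l, 1 ≤ x ∧ x ≤ n - 1) →
      (∀ j, 1 ≤ j → j ≤ t + 1 → (opred n)^[j] cur ≠ mp) →
      chainLen n (l.insertIdx t mp) cur = chainLen n l cur := by
  intro l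
  induction l with
  | nil =>
    intro t cur ht hc1 hc2 _ hj
    have ht0 : t = 0 := by simpa using ht
    subst ht0
    rw [List.insertIdx_zero]
    simp only [chainLen]
    split
    · rename_i h
      exfalso
      apply hj 1 le_rfl (by omega)
      rw [Function.iterate_one, h, opred_osucc hn hmp1 hmp2]
    · rfl
  | cons b rest ih =>
    intro t cur ht hc1 hc2 hl hj
    cases t with
    | zero =>
      rw [List.insertIdx_zero]
      simp only [chainLen]
      split
      · rename_i h
        exfalso
        apply hj 1 le_rfl (by omega)
        rw [Function.iterate_one, h, opred_osucc hn hmp1 hmp2]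
      · rfl
    | succ t' =>
      rw [List.insertIdx_succ_cons]
      have hb := hl b (List.mem_cons_self)
      simp only [chainLen]
      split
      · rename_i h
        have hbc : b = opred n cur := by rw [h, opred_osucc hn hb.1 hb.2]
        have ihe := ih t' b (by simpa using ht) hb.1 hb.2
          (fun x hx => hl x (List.mem_cons_of_mem _ hx))
          (fun j hj1 hj2 => by
            rw [hbc, ← Function.iterate_succ_apply]
            exact hj (j+1) (by omega) (by omega))
        rw [ihe]
      · exact ih t' cur (by simpa using ht) hc1 hc2
          (fun x hx => hl x (List.mem_cons_of_mem _ hx))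
          (fun j hj1 hj2 => hj j hj1 (by omega))

lemma chainLen_append (hn : 5 ≤ n) (y : ℕ) :
    ∀ (l : List ℕ) (cur : ℕ), 1 ≤ cur → cur ≤ n-1 → (∀ x ∈ l, 1 ≤ x ∧ x ≤ n-1) →
      chainLen n (l ++ [y]) cur =
        chainLen n l cur + (if (opred n)^[chainLen n l cur] cur = osucc n y then 1 else 0) := by
  intro l
  induction l with
  | nil =>
    intro cur _ _ _
    simp [chainLen]
    congr
  | cons b rest ih =>
    intro cur hc1 hc2 hl
    have hb := hl b (List.mem_cons_self)
    by_cases h : cur = osucc n b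
    · have hbc : opred n cur = b := by rw [h, opred_osucc hn hb.1 hb.2]
      have e1 : chainLen n ((b :: rest) ++ [y]) cur = chainLen n (rest ++ [y]) b + 1 := by
        simp only [List.cons_append, List.append_eq, chainLen, if_pos h]
      have e2 : chainLen n (b :: rest) cur = chainLen n rest b + 1 := by
        simp only [chainLen, if_pos h]
      rw [e1, e2, ih b hb.1 hb.2 (fun x hx => hl x (List.mem_cons_of_mem _ hx))]
      have e3 : (opred n)^[chainLen n rest b + 1] cur = (opred n)^[chainLen n rest b] b := by
        rw [Function.iterate_succ_apply, hbc]
      rw [e3]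
      generalize (if (opred n)^[chainLen n rest b] b = osucc n y then 1 else 0) = z
      omega
    · have e1 : chainLen n ((b :: rest) ++ [y]) cur = chainLen n (rest ++ [y]) cur := by
        simp only [List.cons_append, List.append_eq, chainLen, if_neg h]
      have e2 : chainLen n (b :: rest) cur = chainLen n rest cur := by
        simp only [chainLen, if_neg h]
      rw [e1, e2, ih cur hc1 hc2 (fun x hx => hl x (List.mem_cons_of_mem _ hx))]

def descChain (n cur L : ℕ) : List ℕ := (List.range L).map (fun j => (opred n)^[j+1] cur)

lemma descChain_length (n cur L : ℕ) : (descChain n cur L).length = L := by simp [descChain]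

lemma descChain_succ (n cur L : ℕ) :
    descChain n cur (L+1) = opred n cur :: descChain n (opred n cur) L := by
  unfold descChain
  rw [List.range_succ_eq_map, List.map_cons, List.map_map]
  congr 1

lemma descChain_snoc (n cur L : ℕ) :
    descChain n cur (L+1) = descChain n cur L ++ [(opred n)^[L+1] cur] := by
  unfold descChain
  rw [List.range_succ, List.map_append, List.map_singleton]

lemma chainLen_descChain (hn : 5 ≤ n) :
    ∀ (L cur : ℕ), 1 ≤ cur → cur ≤ n-1 → chainLen n (descChain n cur L) cur = L := by
  intro L
  induction L with
  | zero => intro cur _ _; simp [descChain, chainLen]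
  | succ L ih =>
    intro cur h1 h2
    rw [descChain_succ]
    simp only [chainLen]
    rw [if_pos (osucc_opred hn h1 h2).symm]
    obtain ⟨p1, p2⟩ := opred_range hn h1 h2
    rw [ih _ p1 p2]

lemma descChain_range (hn : 5 ≤ n) {cur : ℕ} (h1 : 1 ≤ cur) (h2 : cur ≤ n-1) (L : ℕ) :
    ∀ x ∈ descChain n cur L, 1 ≤ x ∧ x ≤ n-1 := by
  intro x hx
  unfold descChain at hx
  simp only [List.mem_map, List.mem_range] at hx
  obtain ⟨j, _, rfl⟩ := hx
  exact opred_iter_range hn h1 h2 (j+1)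

lemma eq_descChain_of_full (hn : 5 ≤ n) :
    ∀ (l : List ℕ) (cur : ℕ), 1 ≤ cur → cur ≤ n-1 →
      (∀ x ∈ l, 1 ≤ x ∧ x ≤ n-1) → chainLen n l cur = l.length →
      l = descChain n cur l.length := by
  intro l
  induction l with
  | nil => intro cur _ _ _ _; simp [descChain]
  | cons b rest ih =>
    intro cur h1 h2 hl hfull
    have hb := hl b (List.mem_cons_self)
    by_cases h : cur = osucc n b
    · have hbc : b = opred n cur := by rw [h, opred_osucc hn hb.1 hb.2]
      have hfr : chainLen n rest b = rest.length := by
        have h' := hfull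
        simp only [chainLen, if_pos h, List.length_cons] at h'
        omega
      have hr := ih b hb.1 hb.2 (fun x hx => hl x (List.mem_cons_of_mem _ hx)) hfr
      rw [List.length_cons, descChain_succ, ← hbc, ← hr]
    · exfalso
      have hle := chainLen_le n rest cur
      simp only [chainLen, if_neg h, List.length_cons] at hfull
      omega

end Chain

section Rot

lemma rotate_eq_self_of_head (A : List ℕ) (hA : A.Nodup) (hne : A ≠ []) (k : ℕ)
    (h : (A.rotate k).head? = A.head?) : A.rotate k = A := by
  have hlen : 0 < A.length := List.length_pos_iff.mpr hne
  rw [← List.rotate_mod] at h ⊢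
  have hk : k % A.length < A.length := Nat.mod_lt _ hlen
  rw [List.head?_rotate hk, List.head?_eq_getElem?] at h
  have h0 := (List.getElem?_inj hk hA).mp h
  rw [h0, List.rotate_zero]

lemma isRotated_eq_of_head (A B : List ℕ) (hA : A.Nodup) (hne : A ≠ []) (h : A ~r B)
    (hh : A.head? = B.head?) : A = B := by
  obtain ⟨k, hk⟩ := h
  rw [← hk] at hh
  rw [← hk, rotate_eq_self_of_head A hA hne k hh.symm]

lemma insert_rot (n : ℕ) (pt : List ℕ) (mp : ℕ) (i : ℕ) (hi : i ≤ (n :: pt).length) :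
    ∃ a, a ≤ pt.length ∧ ∃ s, ((n :: pt).insertIdx i mp).rotate s = n :: pt.insertIdx a mp := by
  cases i with
  | zero =>
    refine ⟨pt.length, le_rfl, 1, ?_⟩
    rw [List.insertIdx_zero, List.rotate_cons_succ, List.rotate_zero,
      List.insertIdx_length_self]
    rfl
  | succ i' =>
    refine ⟨i', by simpa using hi, 0, ?_⟩
    rw [List.insertIdx_succ_cons, List.rotate_zero]

lemma seed_struct (n : ℕ) (hn : 5 ≤ n) (p : List ℕ) (hp : IsSeed n p) :
    ∃ a2 rest, p = n :: a2 :: rest ∧ rest.length = n - 3 ∧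
      (n :: mis n p :: a2 :: rest).Perm (List.range' 1 n) ∧
      (n :: mis n p :: a2 :: rest).Nodup ∧
      mis n p = osucc n a2 := by
  obtain ⟨hlen, hhead, hperm⟩ := hp
  match p, hlen with
  | a1 :: a2 :: rest, hlen =>
    have ha1 : n = a1 := by have := hhead; simp at this; omega
    subst ha1
    have hmis : mis n (n :: a2 :: rest) = osucc n a2 := by simp [mis]
    refine ⟨a2, rest, rfl, by simp at hlen; omega, ?_, ?_, hmis⟩
    · rw [hmis]
      simpa [seedToPerm, IsPerm] using hperm
    · rw [hmis]
      have : (seedToPerm n (n :: a2 :: rest)).Nodup :=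
        hperm.nodup_iff.mpr (List.nodup_range' (s := 1) (n := n))
      simpa [seedToPerm] using this
  | [], hlen => simp at hlen; omega
  | [a], hlen => simp at hlen; omega

lemma hub_tail_eq (n : ℕ) (hn : 5 ≤ n) (x : ℕ) :
    (List.range (n-2)).map (fun j => (opred n)^[j] x) = x :: descChain n x (n-3) := by
  rw [show n - 2 = (n-3) + 1 from by omega, List.range_succ_eq_map, List.map_cons,
    List.map_map]
  congr 1

lemma chainLen_hub (n : ℕ) (hn : 5 ≤ n) (b : ℕ) (h1 : 1 ≤ b) (h2 : b ≤ n-1) :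
    chainLen n ((hubSeed n b).drop 2) ((hubSeed n b).getD 1 0) = n - 3 := by
  unfold hubSeed
  rw [hub_tail_eq n hn b]
  have e1 : (n :: b :: descChain n b (n-3)).drop 2 = descChain n b (n-3) := rfl
  have e2 : (n :: b :: descChain n b (n-3)).getD 1 0 = b := rfl
  rw [e1, e2, chainLen_descChain hn (n-3) b h1 h2]

end Rot

lemma chainLen_parent (n : ℕ) (hn : 5 ≤ n) (p c : List ℕ) (hpar : IsParent n p c)
    (hch : c ∉ Hub n) :
    chainLen n (p.drop 2) (p.getD 1 0) = chainLen n (c.drop 2) (c.getD 1 0) + 1 := by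
  obtain ⟨hps, hcs, hne, hint, hht, hmis⟩ := hpar
  obtain ⟨a2p, restp, hpE, hrpl, hppm, hpnd, hmp⟩ := seed_struct n hn p hps
  obtain ⟨a2c, restc, hcE, hrcl, hcpm, hcnd, hmc⟩ := seed_struct n hn c hcs
  subst hpE; subst hcE
  obtain ⟨π, ⟨i₁, j₁, hi₁, hπ₁⟩, ⟨i₂, j₂, hi₂, hπ₂⟩⟩ := hint
  clear hne hht hps hcs
  generalize hmpg : mis n (n :: a2p :: restp) = mp at *
  generalize hmcg : mis n (n :: a2c :: restc) = mc at *
  have hrangep : ∀ x ∈ mp :: a2p :: restp, 1 ≤ x ∧ x ≤ n - 1 := by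
    intro x hx
    have h1 : x ∈ List.range' 1 n := hppm.mem_iff.mp (List.mem_cons_of_mem _ hx)
    rw [List.mem_range'_1] at h1
    have hxn : x ≠ n := fun hxe => ((List.nodup_cons.mp hpnd).1 (hxe ▸ hx))
    omega
  have hrangec : ∀ x ∈ mc :: a2c :: restc, 1 ≤ x ∧ x ≤ n - 1 := by
    intro x hx
    have h1 : x ∈ List.range' 1 n := hcpm.mem_iff.mp (List.mem_cons_of_mem _ hx)
    rw [List.mem_range'_1] at h1
    have hxn : x ≠ n := fun hxe => ((List.nodup_cons.mp hcnd).1 (hxe ▸ hx))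
    omega
  have hmpr := hrangep mp (List.mem_cons_self)
  have ha2pr := hrangep a2p (by simp)
  have hmcr := hrangec mc (List.mem_cons_self)
  have ha2cr := hrangec a2c (by simp)
  have ha2p : a2p = mc :=
    osucc_inj hn ha2pr.1 ha2pr.2 hmcr.1 hmcr.2 (hmp.symm.trans hmis)
  have ha2c : a2c = opred n mc := by
    rw [hmc, opred_osucc hn ha2cr.1 ha2cr.2]
  obtain ⟨a, ha, s₁, hA⟩ := insert_rot n (a2p :: restp) mp i₁ hi₁
  obtain ⟨b, hb, s₂, hB⟩ := insert_rot n (a2c :: restc) mc i₂ hi₂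
  have hPπ₁ : ((n :: a2p :: restp).insertIdx i₁ mp) ~r π := ⟨j₁, hπ₁.symm⟩
  have hPπ₂ : ((n :: a2c :: restc).insertIdx i₂ mc) ~r π := ⟨j₂, hπ₂.symm⟩
  have hPA : ((n :: a2p :: restp).insertIdx i₁ mp) ~r
      (n :: (a2p :: restp).insertIdx a mp) := ⟨s₁, hA⟩
  have hPB : ((n :: a2c :: restc).insertIdx i₂ mc) ~r
      (n :: (a2c :: restc).insertIdx b mc) := ⟨s₂, hB⟩
  have hAB : (n :: (a2p :: restp).insertIdx a mp) ~r
      (n :: (a2c :: restc).insertIdx b mc) :=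
    (hPA.symm.trans hPπ₁).trans (hPπ₂.symm.trans hPB)
  have hApm : (n :: (a2p :: restp).insertIdx a mp).Perm (n :: mp :: a2p :: restp) :=
    List.Perm.cons n (List.perm_insertIdx mp (a2p :: restp) ha)
  have hAnd : (n :: (a2p :: restp).insertIdx a mp).Nodup := hApm.nodup_iff.mpr hpnd
  have hABeq : (n :: (a2p :: restp).insertIdx a mp) =
      (n :: (a2c :: restc).insertIdx b mc) :=
    isRotated_eq_of_head _ _ hAnd (by simp) hAB rfl
  have hW : (a2p :: restp).insertIdx a mp = (a2c :: restc).insertIdx b mc := by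
    injection hABeq
  have hne1 : mp ≠ mc := hmis ▸ osucc_ne_self hn hmcr.1 hmcr.2
  have hne2 : mp ≠ opred n mc := hmis ▸ osucc_ne_opred hn hmcr.1 hmcr.2
  have hne3 : mc ≠ opred n mc := fun h => (opred_ne_self hn hmcr.1 hmcr.2) h.symm
  cases a with
  | zero =>
    exfalso
    rw [List.insertIdx_zero] at hW
    cases b with
    | zero =>
      rw [List.insertIdx_zero] at hW
      injection hW with h1 _
      exact hne1 h1
    | succ b' =>
      rw [List.insertIdx_succ_cons] at hW
      injection hW with h1 _
      exact hne2 (h1.trans ha2c)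
  | succ a' =>
    rw [List.insertIdx_succ_cons] at hW
    cases b with
    | succ b' =>
      exfalso
      rw [List.insertIdx_succ_cons] at hW
      injection hW with h1 _
      exact hne3 ((ha2p.symm.trans h1).trans ha2c)
    | zero =>
      rw [List.insertIdx_zero] at hW
      injection hW with h0 hW1
      cases restp with
      | nil => exfalso; simp at hrpl; omega
      | cons x restp' =>
        have hxr := hrangep x (by simp)
        have hrp'r : ∀ y ∈ restp', 1 ≤ y ∧ y ≤ n - 1 := fun y hy =>
          hrangep y (by simp [hy])
        have hrp'l : restp'.length = n - 4 := by simp at hrpl; omega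
        cases a' with
        | zero =>
          exfalso
          rw [List.insertIdx_zero] at hW1
          injection hW1 with h1 _
          exact hne2 (h1.trans ha2c)
        | succ k =>
          rw [List.insertIdx_succ_cons] at hW1
          injection hW1 with h1 h2
          have hk : k ≤ restp'.length := by
            simp at ha; omega
          have hmcx : mc = osucc n x := by rw [hmc, ← h1]
          have hmp2 : mp = osucc n (osucc n x) := by rw [hmis, hmcx]
          show chainLen n (x :: restp') a2p = chainLen n restc a2c + 1
          rw [← h2, ← h1]
          have estep : chainLen n (x :: restp') a2p = chainLen n restp' x + 1 := by
            simp only [chainLen]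
            rw [if_pos (by rw [ha2p, hmcx])]
          rw [estep]
          congr 1
          symm
          by_cases hk5 : k + 1 ≤ n - 4
          · apply chainLen_insertIdx hn hmpr.1 hmpr.2 restp' k x hk hxr.1 hxr.2 hrp'r
            intro j hj1 hj2
            rw [hmp2]
            exact iter_ne_osucc2 hn hxr.1 hxr.2 hj1 (by omega)
          · have hkl : k = restp'.length := by omega
            rw [hkl, List.insertIdx_length_self,
              chainLen_append hn mp restp' x hxr.1 hxr.2 hrp'r]
            by_cases hit : (opred n)^[chainLen n restp' x] x = osucc n mp
            · exfalso
              have hCLle : chainLen n restp' x ≤ n - 4 := by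
                have := chainLen_le n restp' x; omega
              have hCL : chainLen n restp' x = n - 4 := by
                apply iter_eq_osucc3 hn hxr.1 hxr.2 hCLle
                rw [← hmp2]; exact hit
              have hfull : restp' = descChain n x restp'.length :=
                eq_descChain_of_full hn restp' x hxr.1 hxr.2 hrp'r (by omega)
              apply hch
              refine ⟨x, hxr.1, hxr.2, ?_⟩
              rw [← h1, ← h2, hkl, List.insertIdx_length_self]
              unfold hubSeed
              rw [hub_tail_eq n hn x, show n - 3 = (n - 4) + 1 from by omega,
                descChain_snoc]
              have hlast : (opred n)^[(n-4)+1] x = mp := by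
                rw [hmp2, osucc2_eq_iter hn hxr.1 hxr.2,
                  show n - 4 + 1 = n - 3 from by omega]
              rw [hlast, ← hrp'l, ← hfull]
            · rw [if_neg hit]
              omega

/-- the parent-sequence from a non-hub seed ψ to anchor(ψ) has
exactly level(ψ) − 1 steps. -/
theorem parent_sequence_length (n : ℕ) (hn : 5 ≤ n) (ψ : List ℕ) (hψ : IsSeed n ψ)
    (hnh : ψ ∉ Hub n) (r : ℕ) (seq : ℕ → List ℕ) (h0 : seq 0 = ψ)
    (hstep : ∀ i < r, IsParent n (seq (i + 1)) (seq i))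
    (hnonhub : ∀ i ≤ r, seq i ∉ Hub n)
    (hanchor : ∃ φ, φ ∈ Hub n ∧ IsParent n φ (seq r)) :
    r = level n ψ - 1 := by
  have key : ∀ i, i ≤ r → chainLen n ((seq i).drop 2) ((seq i).getD 1 0)
      = chainLen n (ψ.drop 2) (ψ.getD 1 0) + i := by
    intro i
    induction i with
    | zero => intro _; rw [h0]; omega
    | succ i ih =>
      intro hi
      rw [chainLen_parent n hn (seq (i+1)) (seq i) (hstep i (by omega))
        (hnonhub i (by omega)), ih (by omega)]
      omega
  obtain ⟨φ, hφ, hφpar⟩ := hanchor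
  obtain ⟨b, hb1, hb2, hφE⟩ := hφ
  have hCLφ : chainLen n (φ.drop 2) (φ.getD 1 0) = n - 3 := by
    rw [hφE]; exact chainLen_hub n hn b hb1 hb2
  have h2 := chainLen_parent n hn φ (seq r) hφpar (hnonhub r le_rfl)
  rw [hCLφ, key r le_rfl] at h2
  unfold level
  omega
end

section
/- For every integer n ≥ 5 and every non-hub seed ψ = (n, a_2, …, a_{n−1}): hub(ψ) = (n, b, b⊖1, b⊖2, …, b⊖(n−3)), where b = a_2 ⊕ level(ψ) (here a ⊕ j denotes j-fold application of the cyclic successor ⊕). -/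
-- ================== helpers ==================
namespace SWHub

def curAfter (n : ℕ) : List ℕ → ℕ → ℕ
  | [], c => c
  | b :: rest, c => if c = osucc n b then curAfter n rest b else curAfter n rest c

variable {n : ℕ}

lemma osucc_range (hn : 5 ≤ n) {c : ℕ} (h1 : 1 ≤ c) (h2 : c ≤ n - 1) :
    1 ≤ osucc n c ∧ osucc n c ≤ n - 1 := by
  simp only [osucc]; split_ifs <;> omega

lemma opred_range (hn : 5 ≤ n) {c : ℕ} (h1 : 1 ≤ c) (h2 : c ≤ n - 1) :
    1 ≤ opred n c ∧ opred n c ≤ n - 1 := by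
  simp only [opred]; split_ifs <;> omega

lemma osucc_opred (hn : 5 ≤ n) {c : ℕ} (h1 : 1 ≤ c) (h2 : c ≤ n - 1) :
    osucc n (opred n c) = c := by
  simp only [osucc, opred]; split_ifs <;> omega

lemma eq_opred_of_osucc (hn : 5 ≤ n) {b c : ℕ} (hb1 : 1 ≤ b) (hb2 : b ≤ n)
    (hc1 : 1 ≤ c) (hc2 : c ≤ n - 1) (h : c = osucc n b) : b = opred n c := by
  simp only [osucc] at h; simp only [opred]; split_ifs at * <;> omega

lemma osucc_inj (hn : 5 ≤ n) {a b : ℕ} (ha1 : 1 ≤ a) (ha2 : a ≤ n - 1)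
    (hb1 : 1 ≤ b) (hb2 : b ≤ n - 1) (h : osucc n a = osucc n b) : a = b := by
  simp only [osucc] at h; split_ifs at h <;> omega

lemma osucc_ne (hn : 5 ≤ n) {c : ℕ} (h1 : 1 ≤ c) (h2 : c ≤ n - 1) : osucc n c ≠ c := by
  simp only [osucc]; split_ifs <;> omega

lemma osucc_osucc_ne (hn : 5 ≤ n) {c : ℕ} (h1 : 1 ≤ c) (h2 : c ≤ n - 1) :
    osucc n (osucc n c) ≠ c := by
  simp only [osucc]; split_ifs <;> omega

lemma opred_iter_range (hn : 5 ≤ n) {c : ℕ} (h1 : 1 ≤ c) (h2 : c ≤ n - 1) (k : ℕ) :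
    1 ≤ (opred n)^[k] c ∧ (opred n)^[k] c ≤ n - 1 := by
  induction k generalizing c with
  | zero => exact ⟨h1, h2⟩
  | succ k ih =>
      rw [Function.iterate_succ_apply]
      exact ih (opred_range hn h1 h2).1 (opred_range hn h1 h2).2

lemma opred_iter_eq (hn : 5 ≤ n) {c : ℕ} (k : ℕ) (h1 : 1 ≤ c) (h2 : c ≤ n - 1)
    (hk : k ≤ n - 2) :
    (opred n)^[k] c = if k < c then c - k else c + (n - 1) - k := by
  induction k generalizing c with
  | zero => simp only [Function.iterate_zero, id_eq]; split_ifs <;> omega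
  | succ k ih =>
      rw [Function.iterate_succ_apply,
        ih (opred_range hn h1 h2).1 (opred_range hn h1 h2).2 (by omega)]
      simp only [opred]; split_ifs <;> omega

end SWHub

namespace SWHub
variable {n : ℕ}

lemma chainLen_cons (b : ℕ) (rest : List ℕ) (c : ℕ) :
    chainLen n (b :: rest) c =
      if c = osucc n b then chainLen n rest b + 1 else chainLen n rest c := rfl

lemma chainLen_le_length : ∀ (l : List ℕ) (c : ℕ), chainLen n l c ≤ l.length := by
  intro l
  induction l with
  | nil => intro c; simp [chainLen]
  | cons b rest ih =>
      intro c
      rw [chainLen_cons]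
      split_ifs
      · simpa using Nat.succ_le_succ (ih b)
      · exact le_trans (ih c) (by simp)

lemma chainLen_append : ∀ (p q : List ℕ) (c : ℕ),
    chainLen n (p ++ q) c = chainLen n p c + chainLen n q (curAfter n p c) := by
  intro p
  induction p with
  | nil => intro q c; simp [chainLen, curAfter]
  | cons b p ih =>
      intro q c
      rw [List.cons_append, chainLen_cons, chainLen_cons]
      simp only [curAfter]
      split_ifs <;> rw [ih] <;> omega

lemma curAfter_eq (hn : 5 ≤ n) : ∀ (p : List ℕ) (c : ℕ), 1 ≤ c → c ≤ n - 1 →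
    (∀ b ∈ p, 1 ≤ b ∧ b ≤ n) → curAfter n p c = (opred n)^[chainLen n p c] c := by
  intro p
  induction p with
  | nil => intro c _ _ _; simp [curAfter, chainLen]
  | cons b p ih =>
      intro c h1 h2 hmem
      rw [chainLen_cons]
      simp only [curAfter]
      split_ifs with h
      · have hb := hmem b (by simp)
        have hbeq : b = opred n c := eq_opred_of_osucc hn hb.1 hb.2 h1 h2 h
        have hbr : 1 ≤ b ∧ b ≤ n - 1 := hbeq ▸ opred_range hn h1 h2
        rw [ih b hbr.1 hbr.2 (fun x hx => hmem x (by simp [hx])), hbeq,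
          ← Function.iterate_succ_apply]
      · exact ih c h1 h2 (fun x hx => hmem x (by simp [hx]))

lemma chainLen_full (hn : 5 ≤ n) : ∀ (l : List ℕ) (c : ℕ), 1 ≤ c → c ≤ n - 1 →
    (∀ b ∈ l, 1 ≤ b ∧ b ≤ n) → chainLen n l c = l.length →
    l = (List.range l.length).map (fun i => (opred n)^[i + 1] c) := by
  intro l
  induction l with
  | nil => intro c _ _ _ _; simp
  | cons b rest ih =>
      intro c h1 h2 hmem hcl
      rw [chainLen_cons] at hcl
      split_ifs at hcl with h
      · have hb := hmem b (by simp)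
        have hbeq : b = opred n c := eq_opred_of_osucc hn hb.1 hb.2 h1 h2 h
        have hbr : 1 ≤ b ∧ b ≤ n - 1 := hbeq ▸ opred_range hn h1 h2
        have hrest := ih b hbr.1 hbr.2 (fun x hx => hmem x (by simp [hx]))
          (by simpa using hcl)
        rw [List.length_cons, List.range_succ_eq_map, List.map_cons, List.map_map]
        refine List.cons_eq_cons.mpr ⟨by simp [hbeq], ?_⟩
        conv_lhs => rw [hrest]
        apply List.map_congr_left
        intro i _
        simp only [Function.comp_apply, Nat.succ_eq_add_one]
        rw [hbeq, ← Function.iterate_succ_apply]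
      · have := chainLen_le_length (n := n) rest c
        simp only [List.length_cons] at hcl
        omega

lemma chainLen_desc (hn : 5 ≤ n) : ∀ (k : ℕ) (c : ℕ), 1 ≤ c → c ≤ n - 1 →
    chainLen n ((List.range k).map (fun i => (opred n)^[i + 1] c)) c = k := by
  intro k
  induction k with
  | zero => intro c _ _; simp [chainLen]
  | succ k ih =>
      intro c h1 h2
      rw [List.range_succ_eq_map, List.map_cons, List.map_map]
      rw [chainLen_cons, if_pos (by simpa using (osucc_opred hn h1 h2).symm)]
      simp only [zero_add, Function.iterate_one]
      have : ((fun i => (opred n)^[i + 1] c) ∘ Nat.succ) =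
          (fun i => (opred n)^[i + 1] (opred n c)) := by
        funext i
        simp only [Function.comp_apply, Nat.succ_eq_add_one]
        rw [← Function.iterate_succ_apply]
      rw [this, ih (opred n c) (opred_range hn h1 h2).1 (opred_range hn h1 h2).2]

end SWHub

namespace SWHub
variable {n : ℕ}

lemma insertIdx_take_drop (x : ℕ) : ∀ (l : List ℕ) (k : ℕ), k ≤ l.length →
    l.insertIdx k x = l.take k ++ x :: l.drop k := by
  intro l
  induction l with
  | nil => intro k hk; have : k = 0 := Nat.le_zero.mp hk; subst this; simp
  | cons b rest ih =>
      intro k hk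
      cases k with
      | zero => simp
      | succ k =>
          rw [List.insertIdx_succ_cons, ih k (by simpa using hk)]
          simp

lemma insertIdx_length_self (x : ℕ) (l : List ℕ) : l.insertIdx l.length x = l ++ [x] := by
  rw [insertIdx_take_drop x l l.length le_rfl]
  simp

lemma insertIdx_perm (x : ℕ) (l : List ℕ) (k : ℕ) (hk : k ≤ l.length) :
    (l.insertIdx k x).Perm (x :: l) := by
  rw [insertIdx_take_drop x l k hk]
  calc (l.take k ++ x :: l.drop k).Perm (x :: (l.take k ++ l.drop k)) := List.perm_middle
    _ = (x :: l) := by rw [List.take_append_drop]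

lemma align (x a1 : ℕ) (tl : List ℕ) (i : ℕ) (hi : i ≤ tl.length + 1) :
    ∃ k ≤ tl.length, ((a1 :: tl).insertIdx i x).IsRotated (a1 :: tl.insertIdx k x) := by
  cases i with
  | zero =>
      refine ⟨tl.length, le_rfl, 1, ?_⟩
      rw [insertIdx_length_self]
      simp only [List.insertIdx_zero]
      rw [show (1 : ℕ) = 0 + 1 by rfl, List.rotate_cons_succ, List.rotate_zero]
      simp
  | succ i =>
      refine ⟨i, by omega, ?_⟩
      rw [List.insertIdx_succ_cons]

lemma rotated_cons_eq {a : ℕ} {u v : List ℕ} (hnd : (a :: u).Nodup)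
    (h : (a :: u).IsRotated (a :: v)) : u = v := by
  obtain ⟨s, hs⟩ := h
  rw [← List.rotate_mod] at hs
  set L := a :: u with hL
  have hlen : 0 < L.length := by simp [hL]
  set s' := s % L.length with hs'
  have hlt : s' < L.length := Nat.mod_lt _ hlen
  rcases Nat.eq_zero_or_pos s' with h0 | hpos
  · rw [h0, List.rotate_zero] at hs
    exact (List.cons.injEq _ _ _ _ ▸ hs).2
  · exfalso
    rw [List.rotate_eq_drop_append_take (le_of_lt hlt)] at hs
    have hdlen : 0 < (L.drop s').length := by
      simp only [List.length_drop]; omega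
    have e0 : (L.drop s' ++ L.take s')[0]'(by simpa [hs] using hdlen) = a := by
      simp only [hs, List.getElem_cons_zero]
    have e1 : (L.drop s' ++ L.take s')[0]'(by simpa [hs] using hdlen) =
        L[s']'hlt := by
      rw [List.getElem_append]
      rw [dif_pos hdlen]
      rw [List.getElem_drop]
      simp
    have e2 : L[s']'hlt = L[0]'hlen := e1.symm.trans e0
    rw [(List.Nodup.getElem_inj_iff hnd).mp e2] at hpos
    exact absurd hpos (lt_irrefl 0)

end SWHub

namespace SWHub
variable {n : ℕ}

lemma seed_shape (hn : 5 ≤ n) {ψ : List ℕ} (h : IsSeed n ψ) :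
    ∃ a2 a3 t, ψ = n :: a2 :: a3 :: t ∧ t.length = n - 4 := by
  obtain ⟨hlen, hhead, _⟩ := h
  match ψ, hlen, hhead with
  | a1 :: a2 :: a3 :: t, hlen, hhead =>
      refine ⟨a2, a3, t, ?_, ?_⟩
      · simp only [List.head?_cons, Option.some.injEq] at hhead
        rw [hhead]
      · simp only [List.length_cons] at hlen; omega
  | [], hlen, hhead => simp at hlen; omega
  | [a1], hlen, hhead => simp at hlen; omega
  | [a1, a2], hlen, hhead => simp at hlen; omega

lemma seed_facts (hn : 5 ≤ n) {a2 : ℕ} {rest : List ℕ}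
    (h : IsSeed n (n :: a2 :: rest)) :
    (n :: a2 :: rest).Nodup ∧ (∀ b ∈ (n : ℕ) :: a2 :: rest, 1 ≤ b ∧ b ≤ n) ∧
      osucc n a2 ∉ (n : ℕ) :: a2 :: rest ∧ 1 ≤ a2 ∧ a2 ≤ n - 1 := by
  obtain ⟨hlen, _, hperm⟩ := h
  have hsp : seedToPerm n (n :: a2 :: rest) = n :: osucc n a2 :: a2 :: rest := rfl
  rw [IsPerm, hsp] at hperm
  have hnd : (n :: osucc n a2 :: a2 :: rest).Nodup :=
    hperm.symm.nodup (List.nodup_range' (s := 1) (n := n))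
  have hmem : ∀ b ∈ (n : ℕ) :: osucc n a2 :: a2 :: rest, 1 ≤ b ∧ b ≤ n := by
    intro b hb
    have := hperm.mem_iff.mp hb
    rw [List.mem_range'] at this
    obtain ⟨i, hi, hbi⟩ := this
    omega
  have hsub : ((n : ℕ) :: a2 :: rest).Sublist (n :: osucc n a2 :: a2 :: rest) :=
    List.Sublist.cons₂ _ (List.sublist_cons_self _ _)
  refine ⟨hsub.nodup hnd, fun b hb => hmem b (hsub.mem hb), ?_, ?_, ?_⟩
  · simp only [List.nodup_cons, List.mem_cons] at hnd
    simp only [List.mem_cons]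
    push_neg
    exact ⟨fun he => hnd.1 (Or.inl he.symm), fun he => hnd.2.1 (Or.inl he),
      fun he => hnd.2.1 (Or.inr he)⟩
  · exact (hmem a2 (by simp)).1
  · have ha2n : a2 ≠ n := by
      simp only [List.nodup_cons, List.mem_cons] at hnd
      intro he; exact hnd.1 (Or.inr (Or.inl he.symm))
    have := (hmem a2 (by simp)).2
    omega

lemma hubSeed_decomp (hn : 5 ≤ n) (b : ℕ) :
    hubSeed n b = n :: b :: (List.range (n - 3)).map (fun i => (opred n)^[i + 1] b) := by
  rw [hubSeed, show n - 2 = (n - 3) + 1 by omega, List.range_succ_eq_map, List.map_cons,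
    List.map_map]
  rfl

lemma level_hubSeed (hn : 5 ≤ n) {b : ℕ} (h1 : 1 ≤ b) (h2 : b ≤ n - 1) :
    level n (hubSeed n b) = 0 := by
  rw [hubSeed_decomp hn b, level]
  simp only [List.drop_succ_cons, List.drop_zero, List.getD_cons_succ, List.getD_cons_zero]
  rw [chainLen_desc hn (n - 3) b h1 h2]
  omega

lemma getD_hubSeed (hn : 5 ≤ n) (b : ℕ) : (hubSeed n b).getD 1 0 = b := by
  rw [hubSeed_decomp hn b]
  rfl

end SWHub

namespace SWHub
variable {n : ℕ}

lemma parent_step (hn : 5 ≤ n) {par β : List ℕ} (hp : IsParent n par β) (hβ : β ∉ Hub n) :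
    par.getD 1 0 = osucc n (β.getD 1 0) ∧ level n par + 1 = level n β := by
  obtain ⟨hSpar, hSβ, _, ⟨π, hπp, hπb⟩, hht, hmis⟩ := hp
  obtain ⟨a2, a3, t, hpareq, htlen⟩ := seed_shape hn hSpar
  obtain ⟨b2, b3, s, hβeq, hslen⟩ := seed_shape hn hSβ
  subst hpareq; subst hβeq
  obtain ⟨hndp, hmemp, hxnotp, ha21, ha22⟩ := seed_facts hn hSpar
  obtain ⟨hndb, hmemb, hynotb, hb21, hb22⟩ := seed_facts hn hSβ
  have ha31 : 1 ≤ a3 := (hmemp a3 (by simp)).1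
  have ha32 : a3 ≤ n - 1 := by
    have h1 := (hmemp a3 (by simp)).2
    have h2 : a3 ≠ n := by
      simp only [List.nodup_cons, List.mem_cons] at hndp
      exact fun he => hndp.1 (Or.inr (Or.inl he.symm))
    omega
  set x := osucc n a2 with hxdef
  set y := osucc n b2 with hydef
  have hmisp : mis n ((n:ℕ) :: a2 :: a3 :: t) = x := rfl
  have hmisb : mis n ((n:ℕ) :: b2 :: b3 :: s) = y := rfl
  have hya2 : a2 = y := by
    rw [hmisp, hmisb] at hmis
    have hyr := osucc_range hn hb21 hb22
    exact osucc_inj hn ha21 ha22 hyr.1 hyr.2 hmis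
  have ha2a3 : a2 = osucc n a3 := by
    by_contra hne
    have hh : height n ((n:ℕ) :: a2 :: a3 :: t) =
        if a2 = osucc n a3 then decRun n (a3 :: t) + 1 else 1 := rfl
    rw [hh, if_neg hne] at hht
    omega
  -- unpack the common permutation π
  obtain ⟨i, j, hi, hπeq⟩ := hπp
  obtain ⟨i', j', hi', hπeq'⟩ := hπb
  rw [hmisp] at hπeq
  rw [hmisb] at hπeq'
  obtain ⟨k, hk, hrotp⟩ := align x n (a2 :: a3 :: t) i (by simpa using hi)
  obtain ⟨k', hk', hrotb⟩ := align y n (b2 :: b3 :: s) i' (by simpa using hi')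
  have hPπ : (((n:ℕ) :: a2 :: a3 :: t).insertIdx i x).IsRotated π := ⟨j, hπeq.symm⟩
  have hBπ : (((n:ℕ) :: b2 :: b3 :: s).insertIdx i' y).IsRotated π := ⟨j', hπeq'.symm⟩
  have hAA' : ((n:ℕ) :: (a2 :: a3 :: t).insertIdx k x).IsRotated
      ((n:ℕ) :: (b2 :: b3 :: s).insertIdx k' y) :=
    hrotp.symm.trans (hPπ.trans (hBπ.symm.trans hrotb))
  have hndA : ((n:ℕ) :: (a2 :: a3 :: t).insertIdx k x).Nodup := by
    obtain ⟨_, _, hperm⟩ := hSpar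
    have hndSTP : ((n:ℕ) :: x :: a2 :: a3 :: t).Nodup :=
      hperm.symm.nodup (List.nodup_range' (s := 1) (n := n))
    have hpermA : ((n:ℕ) :: (a2 :: a3 :: t).insertIdx k x).Perm
        ((n:ℕ) :: x :: a2 :: a3 :: t) :=
      List.Perm.cons _ (insertIdx_perm x _ k hk)
    exact hpermA.symm.nodup hndSTP
  have heq := rotated_cons_eq hndA hAA'
  -- solve the insertion equation
  clear hrotp hrotb hPπ hBπ hAA' hndA hπeq hπeq' hi hi'
  cases k with
  | zero =>
      rw [List.insertIdx_zero] at heq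
      exfalso
      cases k' with
      | zero =>
          rw [List.insertIdx_zero] at heq
          injection heq with h1 _
          have h2 : osucc n a2 = a2 := by rw [← hxdef, h1]; exact hya2.symm
          exact osucc_ne hn ha21 ha22 h2
      | succ k' =>
          rw [List.insertIdx_succ_cons] at heq
          injection heq with h1 _
          have : osucc n (osucc n a2) = a2 := by
            rw [← hxdef, h1, ← hydef, ← hya2]
          exact osucc_osucc_ne hn ha21 ha22 this
  | succ k =>
      rw [List.insertIdx_succ_cons] at heq
      cases k' with
      | succ k' =>
          exfalso
          rw [List.insertIdx_succ_cons] at heq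
          injection heq with h1 _
          refine hynotb ?_
          rw [← hya2, h1]
          simp
      | zero =>
          rw [List.insertIdx_zero] at heq
          injection heq with h1 h2
          cases k with
          | zero =>
              exfalso
              rw [List.insertIdx_zero] at h2
              injection h2 with h3 _
              have : osucc n (osucc n a2) = a2 := by
                rw [← hxdef, h3, ← hydef, ← hya2]
              exact osucc_osucc_ne hn ha21 ha22 this
          | succ m =>
              rw [List.insertIdx_succ_cons] at h2
              injection h2 with h3 h4
              -- h3 : a3 = b2, h4 : t.insertIdx m x = b3 :: s
              simp only [List.length_cons] at hk
              have hm : m ≤ t.length := by omega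
              constructor
              · simp only [List.getD_cons_succ, List.getD_cons_zero]
                rw [← h3]
                exact ha2a3
              · have hlevp : level n ((n:ℕ) :: a2 :: a3 :: t) =
                    n - (chainLen n t a3 + 1) - 3 := by
                  show n - chainLen n (a3 :: t) a2 - 3 = _
                  rw [chainLen_cons, if_pos ha2a3]
                have hlevb : level n ((n:ℕ) :: b2 :: b3 :: s) =
                    n - chainLen n (t.insertIdx m x) a3 - 3 := by
                  show n - chainLen n (b3 :: s) b2 - 3 = _
                  rw [← h3, ← h4]
                have hkey : chainLen n (t.insertIdx m x) a3 = chainLen n t a3 := by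
                  rw [insertIdx_take_drop x t m hm, chainLen_append]
                  set c0 := curAfter n (t.take m) a3 with hc0
                  by_cases hcur : c0 = osucc n x
                  · exfalso
                    have hmemt : ∀ b ∈ t, 1 ≤ b ∧ b ≤ n :=
                      fun b hb => hmemp b (by simp [hb])
                    have hmemtk : ∀ b ∈ t.take m, 1 ≤ b ∧ b ≤ n :=
                      fun b hb => hmemt b (List.take_subset m t hb)
                    have hc0eq : c0 = (opred n)^[chainLen n (t.take m) a3] a3 :=
                      curAfter_eq hn _ _ ha31 ha32 hmemtk
                    set jj := chainLen n (t.take m) a3 with hjj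
                    have hjle : jj ≤ (t.take m).length := chainLen_le_length _ _
                    have hjle2 : jj ≤ n - 4 := by
                      have : (t.take m).length = min m t.length := List.length_take
                      omega
                    have hfor : (opred n)^[jj] a3 =
                        if jj < a3 then a3 - jj else a3 + (n - 1) - jj :=
                      opred_iter_eq hn jj ha31 ha32 (by omega)
                    have hxa : x = osucc n (osucc n a3) := by rw [hxdef, ha2a3]
                    have hjval : jj = n - 4 := by
                      rw [hc0eq, hfor, hxa] at hcur
                      simp only [osucc] at hcur
                      split_ifs at hcur <;> omega
                    have hmval : m = n - 4 := by
                      have : (t.take m).length = min m t.length := List.length_take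
                      omega
                    have htake : t.take m = t := by
                      rw [show m = t.length by omega]
                      exact List.take_length
                    have hclt : chainLen n t a3 = t.length := by
                      rw [htake] at hjj
                      omega
                    have htfull := chainLen_full hn t a3 ha31 ha32 hmemt hclt
                    apply hβ
                    refine ⟨a3, ha31, ha32, ?_⟩
                    rw [hubSeed_decomp hn a3]
                    have hins : t.insertIdx m x = t ++ [x] := by
                      rw [show m = t.length by omega]
                      exact insertIdx_length_self x t
                    have hx2 : x = (opred n)^[n - 3] a3 := by
                      rw [opred_iter_eq hn (n - 3) ha31 ha32 (by omega), hxa]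
                      simp only [osucc]
                      split_ifs <;> omega
                    have hbs : (b3 :: s : List ℕ) = t ++ [x] := by rw [← h4, hins]
                    rw [← h3, hbs]
                    rw [show n - 3 = (n - 4) + 1 by omega, List.range_succ,
                      List.map_append, List.map_singleton,
                      show ((n:ℕ) - 4) + 1 = n - 3 by omega, ← hx2]
                    conv_lhs => rw [htfull, htlen]
                  · rw [chainLen_cons, if_neg hcur]
                    conv_rhs => rw [← List.take_append_drop m t]
                    rw [chainLen_append, hc0]
                have hct : chainLen n t a3 ≤ t.length := chainLen_le_length _ _
                rw [hlevp, hlevb, hkey]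
                omega

end SWHub

/-- for a non-hub seed ψ = (n, a₂, …, a_{n−1}),
hub(ψ) = (n, b, b⊖1, …, b⊖(n−3)) where b = a₂ ⊕ level(ψ). -/
theorem hub_of_seed (n : ℕ) (hn : 5 ≤ n) (ψ : List ℕ) (hψ : IsSeed n ψ)
    (hnh : ψ ∉ Hub n) (r : ℕ) (seq : ℕ → List ℕ) (h0 : seq 0 = ψ)
    (hstep : ∀ i < r, IsParent n (seq (i + 1)) (seq i))
    (hnonhub : ∀ i ≤ r, seq i ∉ Hub n)
    (φ : List ℕ) (hφ : φ ∈ Hub n) (hpar : IsParent n φ (seq r)) :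
    φ = hubSeed n ((osucc n)^[level n ψ] (ψ.getD 1 0)) := by
  have key : ∀ i ≤ r,
      (osucc n)^[level n (seq i)] ((seq i).getD 1 0) =
        (osucc n)^[level n ψ] (ψ.getD 1 0) := by
    intro i
    induction i with
    | zero => intro _; rw [h0]
    | succ i ih =>
        intro hir
        obtain ⟨hg, hl⟩ := SWHub.parent_step hn (hstep i (by omega)) (hnonhub i (by omega))
        rw [hg, ← Function.iterate_succ_apply, Nat.succ_eq_add_one, hl]
        exact ih (by omega)
  obtain ⟨b, hb1, hb2, hφeq⟩ := hφ
  obtain ⟨hg, hl⟩ := SWHub.parent_step hn hpar (hnonhub r le_rfl)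
  have hlev0 : level n φ = 0 := by rw [hφeq]; exact SWHub.level_hubSeed hn hb1 hb2
  have hgb : φ.getD 1 0 = b := by rw [hφeq]; exact SWHub.getD_hubSeed hn b
  have hlr : level n (seq r) = 1 := by omega
  have hb : b = (osucc n)^[level n ψ] (ψ.getD 1 0) := by
    rw [← key r le_rfl, hlr, Function.iterate_one, ← hg, hgb]
  rw [hφeq, hb]
end

section
/- For every integer n ≥ 5 and every n-permutation π = (p_1, …, p_n) such that deleting the entry n from π yields a cyclic shift of (n−1, n−2, …, 1) and n occupies position 1 or position 2 of π: if π = (n, n−1, …, 1) then rank(π) = 2n−3; otherwise, if n is in position 1 then rank(π) = 2(n − p_2 − 1) − 1, and if n is in position 2 then rank(π) = 2(n − p_1 − 1). -/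
-- alternating word
def SPalt (t : ℕ) : List Bool := (List.range t).map (fun i => decide (i % 2 = 1))

lemma SPalt_succ (t : ℕ) : SPalt (t+1) = SPalt t ++ [decide (t % 2 = 1)] := by
  simp [SPalt, List.range_succ]

lemma SPalt_take (t T : ℕ) (h : t ≤ T) : (SPalt T).take t = SPalt t := by
  simp [SPalt, ← List.map_take, List.take_range, Nat.min_eq_left h]

lemma flatten_replicate_gam1 (k : ℕ) : (List.replicate k (gam 1)).flatten = SPalt (2*k) := by
  induction k with
  | zero => rfl
  | succ k ih =>
    rw [List.replicate_succ', List.flatten_append, ih]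
    have h1 : 2*(k+1) = (2*k+1)+1 := by ring
    rw [h1, SPalt_succ, SPalt_succ]
    have : (2*k) % 2 = 0 := by omega
    have h2 : (2*k+1) % 2 = 1 := by omega
    simp [this, h2, gam]

lemma applyWord_append (w v : List Bool) (l : List ℕ) :
    applyWord (w ++ v) l = applyWord v (applyWord w l) := by
  simp [applyWord, List.foldl_append]

lemma applyWord_sig (w : List Bool) (l : List ℕ) :
    applyWord (w ++ [false]) l = sig (applyWord w l) := by
  simp [applyWord_append, applyWord]

lemma applyWord_tau (w : List Bool) (l : List ℕ) :
    applyWord (w ++ [true]) l = tau (applyWord w l) := by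
  simp [applyWord_append, applyWord]

lemma descList_succ (k : ℕ) : descList (k+1) = (k+1) :: descList k := by
  simp [descList, List.range_succ]

lemma descList_length (k : ℕ) : (descList k).length = k := by simp [descList]

lemma descList_drop : ∀ m k, m ≤ k → (descList k).drop m = descList (k - m) := by
  intro m
  induction m with
  | zero => simp
  | succ m ih =>
    intro k hk
    obtain ⟨k', rfl⟩ : ∃ k', k = k' + 1 := ⟨k - 1, by omega⟩
    rw [descList_succ]
    have : (descList (k'+1 - (m+1))) = descList (k' - m) := by congr 1; omega
    rw [this, ← ih k' (by omega)]
    rfl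

lemma rotate_head (n m : ℕ) (hn : 5 ≤ n) (hm : m ≤ n - 2) :
    ∃ s, (descList (n-1)).rotate m = (n-1-m) :: s := by
  have hlen : (descList (n-1)).length = n - 1 := descList_length _
  rw [List.rotate_eq_drop_append_take (by omega), descList_drop m (n-1) (by omega)]
  obtain ⟨k', hk⟩ : ∃ k', n - 1 - m = k' + 1 := ⟨n - 2 - m, by omega⟩
  rw [hk, descList_succ]
  exact ⟨descList k' ++ (descList (n-1)).take m, by rw [← hk]; simp⟩

lemma rotate_succ_of_cons (l : List ℕ) (a : ℕ) (s : List ℕ) (m : ℕ)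
    (h : l.rotate m = a :: s) : l.rotate (m+1) = s ++ [a] := by
  rw [← List.rotate_rotate, h]
  simpa using List.rotate_cons_succ s a 0

lemma sig_cons (a : ℕ) (l : List ℕ) : sig (a :: l) = l ++ [a] := by
  show (a :: l).rotate (0+1) = _
  rw [List.rotate_cons_succ, List.rotate_zero]

-- trajectory
lemma traj (n : ℕ) (hn : 5 ≤ n) : ∀ m, m ≤ n - 2 →
    applyWord (SPalt (2*m)) (tau (descList n)) =
      (n-1-m) :: n :: ((descList (n-1)).rotate m).tail ∧
    applyWord (SPalt (2*m+1)) (tau (descList n)) = n :: (descList (n-1)).rotate (m+1) := by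
  have base : ∀ m, m ≤ n - 2 →
      applyWord (SPalt (2*m)) (tau (descList n)) =
        (n-1-m) :: n :: ((descList (n-1)).rotate m).tail →
      applyWord (SPalt (2*m+1)) (tau (descList n)) = n :: (descList (n-1)).rotate (m+1) := by
    intro m hm he
    rw [SPalt_succ (2*m)]
    have hb : decide ((2*m) % 2 = 1) = false := by
      have : (2*m) % 2 = 0 := by omega
      simp [this]
    rw [hb, applyWord_sig, he, sig_cons]
    obtain ⟨s, hs⟩ := rotate_head n m hn hm
    rw [hs]
    simp only [List.tail_cons]
    rw [rotate_succ_of_cons _ _ _ _ hs]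
    simp
  intro m
  induction m with
  | zero =>
    intro _
    have h0 : applyWord (SPalt 0) (tau (descList n)) =
        (n-1-0) :: n :: ((descList (n-1)).rotate 0).tail := by
      have h2 : descList (n-1) = (n-1) :: descList (n-2) := by
        obtain ⟨k, hk⟩ : ∃ k, n - 1 = k + 1 := ⟨n - 2, by omega⟩
        have hk2 : n - 2 = k := by omega
        rw [hk, hk2, descList_succ, ← hk]
      have h1 : descList n = n :: (n-1) :: descList (n-2) := by
        obtain ⟨k, hk⟩ : ∃ k, n = k + 1 := ⟨n - 1, by omega⟩
        have hk2 : n - 1 = k := by omega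
        rw [hk, descList_succ, ← hk, hk2, ← hk2, h2]
      rw [h1]
      simp [SPalt, applyWord, tau, h2]
    exact ⟨h0, base 0 (by omega) h0⟩
  | succ m ih =>
    intro hm
    have ihO := (ih (by omega)).2
    have he : applyWord (SPalt (2*(m+1))) (tau (descList n)) =
        (n-1-(m+1)) :: n :: ((descList (n-1)).rotate (m+1)).tail := by
      have h1 : 2*(m+1) = (2*m+1)+1 := by ring
      rw [h1, SPalt_succ]
      have hb : decide ((2*m+1) % 2 = 1) = true := by
        have : (2*m+1) % 2 = 1 := by omega
        simp [this]
      rw [hb, applyWord_tau, ihO]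
      obtain ⟨s, hs⟩ := rotate_head n (m+1) hn hm
      rw [hs]
      rfl
    exact ⟨he, base (m+1) hm he⟩


lemma descList_one (n : ℕ) (hn : 1 ≤ n) : descList n = n :: descList (n-1) := by
  obtain ⟨k, hk⟩ : ∃ k, n = k + 1 := ⟨n - 1, by omega⟩
  have hk2 : n - 1 = k := by omega
  rw [hk, descList_succ, ← hk, hk2]

lemma descList_two (n : ℕ) (hn : 2 ≤ n) : descList n = n :: (n-1) :: descList (n-2) := by
  rw [descList_one n (by omega), descList_one (n-1) (by omega)]
  congr 2

lemma SPalt_length (t : ℕ) : (SPalt t).length = t := by simp [SPalt]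

lemma seq_take (n t : ℕ) (hn : 5 ≤ n) (ht : t ≤ 2*n - 3) :
    (SEQ n).take t = SPalt t := by
  have h2 : SPalt (2*n-3) = SPalt (2*(n-2)) ++ [false] := by
    obtain ⟨k, hk⟩ : ∃ k, 2*n-3 = k+1 := ⟨2*n-4, by omega⟩
    have hk2 : k = 2*(n-2) := by omega
    rw [hk, SPalt_succ, hk2]
    congr 1
    have h0 : (2*(n-2)) % 2 = 0 := by omega
    simp [h0]
  have h1 : SEQ n = SPalt (2*n-3) ++
      (false :: ((List.replicate (n - 2) (V n ++ [true])).flatten ++ V n)) := by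
    rw [SEQ, flatten_replicate_gam1, h2]
    simp
  rw [h1, List.take_append_of_le_length (by rw [SPalt_length]; omega), SPalt_take t _ ht]

lemma rank_eq (n : ℕ) (π : List ℕ) (r : ℕ)
    (hmem : applyWord ((SEQ n).take r) (tau (descList n)) = π)
    (hmin : ∀ t < r, applyWord ((SEQ n).take t) (tau (descList n)) ≠ π) :
    rank n π = r := by
  refine le_antisymm (Nat.sInf_le hmem) (le_csInf ⟨r, hmem⟩ ?_)
  intro t ht
  by_contra h
  exact hmin t (by omega) ht

/-- ranks of the permutations of the starting path: those π in
which deleting the entry n leaves a cyclic shift of (n−1, …, 1) and n occupies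
position 1 or 2. -/
theorem rank_of_starting_path (n : ℕ) (hn : 5 ≤ n) (π : List ℕ)
    (hπ : IsPerm n π)
    (hdel : ∃ j, π.erase n = (descList (n - 1)).rotate j)
    (hpos : π.getD 0 0 = n ∨ π.getD 1 0 = n) :
    rank n π =
      if π = descList n then 2 * n - 3
      else if π.getD 0 0 = n then 2 * (n - π.getD 1 0 - 1) - 1
      else 2 * (n - π.getD 0 0 - 1) := by
  have hlen : π.length = n := by simpa using hπ.length_eq
  obtain ⟨j, hj⟩ := hdel
  have hdlen : (descList (n-1)).length = n - 1 := descList_length _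
  have hjlt : j % (n-1) < n - 1 := Nat.mod_lt _ (by omega)
  have hj2 : π.erase n = (descList (n-1)).rotate (j % (n-1)) := by
    have hmod := List.rotate_mod (descList (n-1)) j
    rw [hdlen] at hmod
    rw [hj, ← hmod]
  set j' := j % (n-1) with hj'def
  clear hj hj'def
  by_cases h0 : π.getD 0 0 = n
  · -- n is in position 1
    obtain ⟨ρ, hπeq⟩ : ∃ ρ, π = n :: ρ := by
      cases π with
      | nil => simp at hlen; omega
      | cons a ρ => exact ⟨ρ, by simp at h0; rw [h0]⟩
    subst hπeq
    have hρ : ρ = (descList (n-1)).rotate j' := by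
      rw [← hj2, List.erase_cons_head]
    by_cases hz : j' = 0
    · -- π = descList n
      have hπd : n :: ρ = descList n := by
        rw [hρ, hz, List.rotate_zero, ← descList_one n (by omega)]
      rw [if_pos hπd, hπd]
      apply rank_eq
      · rw [seq_take n _ hn (le_refl _)]
        have h23 : 2*n-3 = 2*(n-2)+1 := by omega
        rw [h23, (traj n hn (n-2) (le_refl _)).2]
        have h24 : n-2+1 = n-1 := by omega
        have hrl := List.rotate_length (descList (n-1))
        rw [hdlen] at hrl
        rw [h24, hrl, ← descList_one n (by omega)]
      · intro t ht heq
        rw [seq_take n t hn (by omega)] at heq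
        rcases Nat.even_or_odd t with ⟨m, hm⟩ | ⟨m, hm⟩
        · have hm' : t = 2*m := by omega
          subst hm'
          have hmle : m ≤ n-2 := by omega
          rw [(traj n hn m hmle).1, descList_one n (by omega)] at heq
          simp only [List.cons.injEq] at heq
          omega
        · have hmle : m + 1 ≤ n-2 := by omega
          rw [hm, (traj n hn m (by omega)).2, descList_two n (by omega)] at heq
          obtain ⟨s, hs⟩ := rotate_head n (m+1) hn hmle
          rw [hs] at heq
          simp only [List.cons.injEq] at heq
          omega
    · -- π = n :: rotate j', 1 ≤ j' ≤ n-2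
      obtain ⟨s, hs⟩ := rotate_head n j' hn (by omega)
      have hρ2 : ρ = (n-1-j') :: s := by rw [hρ, hs]
      have hne : n :: ρ ≠ descList n := by
        rw [hρ2, descList_two n (by omega)]
        simp only [ne_eq, List.cons.injEq, not_and]
        intro _ h _
        omega
      rw [if_neg hne, if_pos h0]
      have hg1 : (n :: ρ).getD 1 0 = n-1-j' := by rw [hρ2]; rfl
      rw [hg1]
      have hval : 2 * (n - (n-1-j') - 1) - 1 = 2*j' - 1 := by omega
      rw [hval]
      have hr : 2*j' - 1 = 2*(j'-1)+1 := by omega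
      rw [hr]
      apply rank_eq
      · rw [seq_take n _ hn (by omega), (traj n hn (j'-1) (by omega)).2]
        have : j' - 1 + 1 = j' := by omega
        rw [this, ← hρ]
      · intro t ht heq
        rw [seq_take n t hn (by omega)] at heq
        rcases Nat.even_or_odd t with ⟨m, hm⟩ | ⟨m, hm⟩
        · have hm' : t = 2*m := by omega
          subst hm'
          have hmle : m ≤ n-2 := by omega
          rw [(traj n hn m hmle).1, hρ2] at heq
          simp only [List.cons.injEq] at heq
          omega
        · have hmle : m + 1 ≤ n-2 := by omega
          rw [hm, (traj n hn m (by omega)).2, hρ2] at heq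
          obtain ⟨s2, hs2⟩ := rotate_head n (m+1) hn hmle
          rw [hs2] at heq
          simp only [List.cons.injEq] at heq
          omega
  · -- n is in position 2
    have h1 : π.getD 1 0 = n := hpos.resolve_left h0
    obtain ⟨p, rest, hπeq⟩ : ∃ p rest, π = p :: n :: rest := by
      match π, hlen with
      | a :: b :: rest, _ => exact ⟨a, rest, by simp at h1; rw [h1]⟩
      | [], hlen => simp at hlen; omega
      | [a], hlen => simp at hlen; omega
    subst hπeq
    have hpn : p ≠ n := by simpa using h0
    have herase : (p :: n :: rest).erase n = p :: rest := by
      rw [List.erase_cons_tail (by simp [hpn]), List.erase_cons_head]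
    have hrest : p :: rest = (descList (n-1)).rotate j' := by rw [← herase, hj2]
    obtain ⟨s, hs⟩ := rotate_head n j' hn (by omega)
    rw [hs] at hrest
    simp only [List.cons.injEq] at hrest
    obtain ⟨hp, hrest2⟩ := hrest
    have hne : p :: n :: rest ≠ descList n := by
      rw [descList_two n (by omega)]
      simp only [ne_eq, List.cons.injEq, not_and]
      intro h
      omega
    rw [if_neg hne, if_neg h0]
    have hg0 : (p :: n :: rest).getD 0 0 = p := rfl
    rw [hg0, hp]
    have hval : 2 * (n - (n-1-j') - 1) = 2*j' := by omega
    rw [hval]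
    apply rank_eq
    · rw [seq_take n _ hn (by omega), (traj n hn j' (by omega)).1, hs]
      simp only [List.tail_cons]
      rw [← hp, ← hrest2]
    · intro t ht heq
      rw [seq_take n t hn (by omega)] at heq
      rcases Nat.even_or_odd t with ⟨m, hm⟩ | ⟨m, hm⟩
      · have hm' : t = 2*m := by omega
        subst hm'
        have hmle : m ≤ n-2 := by omega
        rw [(traj n hn m hmle).1] at heq
        simp only [List.cons.injEq] at heq
        omega
      · have hmle : m + 1 ≤ n-2 := by omega
        rw [hm, (traj n hn m (by omega)).2] at heq
        simp only [List.cons.injEq] at heq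
        omega
end
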